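/- arXiv:2305.17556 — 3 statements merged into one kernel-verified Lean document; each statement's English description precedes it below -/
import Mathlib

section
/- Let OPT be the minimum makespan of a scheduling instance with m processors of speeds s_1,…,s_m ≥ s_min and equal processing costs p, and let T* be the minimum makespan of the same instance under the additional constraint that on each processor i every start time is an integer multiple of p/s_i. Then T* − p/s_min ≤ OPT ≤ T*. -/
/-- A schedule of `n` equal-cost tasks on `m` related processors: a processor assignment
and start times, with tasks on a common processor not overlapping. -/
def Feasible {n m : ℕ} (s : Fin m → ℝ) (p : ℝ)
    (proc : Fin n → Fin m) (start : Fin n → ℝ) : Prop :=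
  (∀ j, 0 ≤ start j) ∧
    ∀ j k, j ≠ k → proc j = proc k →
      start j + p / s (proc j) ≤ start k ∨ start k + p / s (proc k) ≤ start j

/-- The makespan of a schedule: the maximum completion time. -/
noncomputable def makespan {n m : ℕ} (s : Fin m → ℝ) (p : ℝ)
    (proc : Fin n → Fin m) (start : Fin n → ℝ) : ℝ :=
  ⨆ j, (start j + p / s (proc j))

lemma ceil_step (a b q : ℝ) (ha : 0 ≤ a) (hq : 0 < q) (h : a + q ≤ b) :
    (⌈a / q⌉₊ : ℝ) * q + q ≤ (⌈b / q⌉₊ : ℝ) * q := by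
  have hab : a / q + 1 ≤ b / q := by
    rw [div_add' _ _ _ hq.ne']
    exact div_le_div_of_nonneg_right (by linarith) hq.le
  have h1 : (⌈a / q⌉₊ : ℕ) + 1 ≤ ⌈b / q⌉₊ := by
    have h2 := Nat.ceil_le_ceil (R := ℝ) hab
    rwa [Nat.ceil_add_one (div_nonneg ha hq.le)] at h2
  have h3 : ((⌈a / q⌉₊ : ℝ) + 1) * q ≤ (⌈b / q⌉₊ : ℝ) * q := by
    apply mul_le_mul_of_nonneg_right _ hq.le
    exact_mod_cast h1
  nlinarith [h3]

lemma ceil_ub (a q : ℝ) (ha : 0 ≤ a) (hq : 0 < q) :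
    (⌈a / q⌉₊ : ℝ) * q ≤ a + q := by
  have h := (Nat.ceil_lt_add_one (div_nonneg ha hq.le)).le
  have h2 := mul_le_mul_of_nonneg_right h hq.le
  calc (⌈a / q⌉₊ : ℝ) * q ≤ (a / q + 1) * q := h2
    _ = a + q := by field_simp


/-- Restricting start times on processor i to multiples of p/s_i raises the optimum
makespan by at most p/s_min: T* − p/s_min ≤ OPT ≤ T*. -/
theorem stmt4 (n m : ℕ) (s : Fin m → ℝ) (smin p : ℝ) (hp : 0 < p) (hsmin : 0 < smin)
    (hs : ∀ i, smin ≤ s i)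
    (OPT Tstar : ℝ)
    (hOPT : OPT = sInf {C | ∃ proc : Fin n → Fin m, ∃ start : Fin n → ℝ,
      Feasible s p proc start ∧ makespan s p proc start = C})
    (hTstar : Tstar = sInf {C | ∃ proc : Fin n → Fin m, ∃ start : Fin n → ℝ,
      Feasible s p proc start ∧ (∀ j, ∃ k : ℕ, start j = (k : ℝ) * (p / s (proc j))) ∧
      makespan s p proc start = C}) :
    Tstar - p / smin ≤ OPT ∧ OPT ≤ Tstar := by
  set S : Set ℝ := {C | ∃ proc : Fin n → Fin m, ∃ start : Fin n → ℝ,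
      Feasible s p proc start ∧ makespan s p proc start = C} with hS
  set S' : Set ℝ := {C | ∃ proc : Fin n → Fin m, ∃ start : Fin n → ℝ,
      Feasible s p proc start ∧ (∀ j, ∃ k : ℕ, start j = (k : ℝ) * (p / s (proc j))) ∧
      makespan s p proc start = C} with hS'
  have hspos : ∀ i, 0 < s i := fun i => lt_of_lt_of_le hsmin (hs i)
  have hqpos : ∀ i, 0 < p / s i := fun i => div_pos hp (hspos i)
  have hqle : ∀ i, p / s i ≤ p / smin := fun i =>
    div_le_div_of_nonneg_left hp.le hsmin (hs i)
  have hpsmin : 0 < p / smin := div_pos hp hsmin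
  have hsub : S' ⊆ S := by
    rintro C ⟨proc, start, hf, _, hmk⟩
    exact ⟨proc, start, hf, hmk⟩
  -- every element of S is nonneg
  have hSnn : ∀ C ∈ S, 0 ≤ C := by
    rintro C ⟨proc, start, ⟨hst, _⟩, rfl⟩
    unfold makespan
    rcases Nat.eq_zero_or_pos n with hn | hn
    · subst hn
      simp [iSup, Set.range_eq_empty, Real.sSup_empty]
    · have j0 : Fin n := ⟨0, hn⟩
      have h1 : start j0 + p / s (proc j0) ≤ ⨆ j, (start j + p / s (proc j)) :=
        le_ciSup (f := fun j => start j + p / s (proc j))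
          (Set.Finite.bddAbove (Set.finite_range _)) j0
      have h2 : (0:ℝ) ≤ start j0 + p / s (proc j0) :=
        add_nonneg (hst j0) (hqpos _).le
      linarith
  have hbddS : BddBelow S := ⟨0, hSnn⟩
  have hbddS' : BddBelow S' := ⟨0, fun C hC => hSnn C (hsub hC)⟩
  -- rounding: from any C ∈ S, get C' ∈ S' with C' ≤ C + p/smin
  have hround : ∀ C ∈ S, ∃ C' ∈ S', C' ≤ C + p / smin := by
    rintro C ⟨proc, start, ⟨hst, hno⟩, rfl⟩
    set q : Fin n → ℝ := fun j => p / s (proc j) with hqdef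
    set start' : Fin n → ℝ := fun j => (⌈start j / q j⌉₊ : ℝ) * q j with hstart'
    have hfeas : Feasible s p proc start' := by
      refine ⟨fun j => ?_, fun j k hjk hpk => ?_⟩
      · exact mul_nonneg (Nat.cast_nonneg _) (hqpos _).le
      · rcases hno j k hjk hpk with h | h
        · left
          have := ceil_step (start j) (start k) (q j) (hst j) (hqpos (proc j)) h
          simp only [hstart', hqdef] at *
          rw [hpk] at this ⊢
          exact this
        · right
          have := ceil_step (start k) (start j) (q k) (hst k) (hqpos (proc k)) h
          simp only [hstart', hqdef] at *
          rw [hpk]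
          exact this
    refine ⟨makespan s p proc start', ⟨proc, start', hfeas, fun j => ⟨⌈start j / q j⌉₊, rfl⟩, rfl⟩, ?_⟩
    unfold makespan
    rcases Nat.eq_zero_or_pos n with hn | hn
    · subst hn
      simp only [iSup, Set.range_eq_empty, Real.sSup_empty]
      positivity
    · haveI : Nonempty (Fin n) := ⟨⟨0, hn⟩⟩
      apply ciSup_le
      intro j
      have h1 : start' j ≤ start j + q j := ceil_ub (start j) (q j) (hst j) (hqpos _)
      have h2 : start j + p / s (proc j) ≤ ⨆ k, (start k + p / s (proc k)) :=
        le_ciSup (f := fun k => start k + p / s (proc k))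
          (Set.Finite.bddAbove (Set.finite_range _)) j
      have h3 : q j ≤ p / smin := hqle _
      simp only [hqdef] at h1 h3
      linarith
  -- conclude
  constructor
  · rcases Set.eq_empty_or_nonempty S with hSe | hSne
    · have hS'e : S' = ∅ := Set.eq_empty_of_subset_empty (hSe ▸ hsub)
      rw [hOPT, hTstar, hSe, hS'e, Real.sInf_empty]
      linarith
    · rw [hOPT, hTstar]
      apply le_csInf hSne
      intro C hC
      rcases hround C hC with ⟨C', hC', hle⟩
      have := csInf_le hbddS' hC'
      linarith
  · rcases Set.eq_empty_or_nonempty S' with hS'e | hS'ne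
    · have hSe : S = ∅ := by
        by_contra h
        rcases Set.nonempty_iff_ne_empty.2 h with ⟨C, hC⟩
        rcases hround C hC with ⟨C', hC', _⟩
        exact (hS'e ▸ hC' : C' ∈ (∅ : Set ℝ))
      rw [hOPT, hTstar, hSe, hS'e]
    · rw [hOPT, hTstar]
      exact csInf_le_csInf hbddS hS'ne hsub
end

section
/- Rounding up every start time of a feasible schedule on processor i to the next multiple of p/s_i (processing in the same order) yields a feasible schedule, and its makespan exceeds the original makespan by at most p/s_min, where s_min = min_i s_i. -/
/-- Rounding every start time on processor i up to the next multiple of p/s_i keeps the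
schedule feasible and increases the makespan by at most p/s_min. -/
theorem stmt5 (n m : ℕ) (s : Fin m → ℝ) (smin p : ℝ) (hp : 0 < p) (hsmin : 0 < smin)
    (hs : ∀ i, smin ≤ s i)
    (proc : Fin n → Fin m) (start : Fin n → ℝ)
    (hfeas : Feasible s p proc start) :
    Feasible s p proc (fun j => (⌈start j * s (proc j) / p⌉₊ : ℝ) * (p / s (proc j))) ∧
      makespan s p proc (fun j => (⌈start j * s (proc j) / p⌉₊ : ℝ) * (p / s (proc j))) ≤
        makespan s p proc start + p / smin := by
  obtain ⟨hnn, hsep⟩ := hfeas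
  have hspos : ∀ i, (0:ℝ) < s i := fun i => lt_of_lt_of_le hsmin (hs i)
  have hq : ∀ i, 0 < p / s i := fun i => div_pos hp (hspos i)
  have hrw : ∀ j, start j * s (proc j) / p = start j / (p / s (proc j)) := by
    intro j
    field_simp
  have hlow : ∀ j, start j ≤ (⌈start j * s (proc j) / p⌉₊ : ℝ) * (p / s (proc j)) := by
    intro j
    rw [hrw j]
    have := Nat.le_ceil (start j / (p / s (proc j)))
    calc start j = start j / (p / s (proc j)) * (p / s (proc j)) :=
          (div_mul_cancel₀ _ (ne_of_gt (hq (proc j)))).symm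
      _ ≤ _ := by
          apply mul_le_mul_of_nonneg_right this (le_of_lt (hq (proc j)))
  have hhigh : ∀ j, (⌈start j * s (proc j) / p⌉₊ : ℝ) * (p / s (proc j)) ≤
      start j + p / s (proc j) := by
    intro j
    rw [hrw j]
    have h0 : 0 ≤ start j / (p / s (proc j)) := div_nonneg (hnn j) (le_of_lt (hq (proc j)))
    have := (Nat.ceil_lt_add_one h0).le
    calc (⌈start j / (p / s (proc j))⌉₊ : ℝ) * (p / s (proc j))
        ≤ (start j / (p / s (proc j)) + 1) * (p / s (proc j)) :=
          mul_le_mul_of_nonneg_right this (le_of_lt (hq (proc j)))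
      _ = start j + p / s (proc j) := by
          rw [add_mul, div_mul_cancel₀ _ (ne_of_gt (hq (proc j))), one_mul]
  refine ⟨⟨fun j => (hnn j).trans (hlow j), ?_⟩, ?_⟩
  · intro j k hjk hpjk
    rcases hsep j k hjk hpjk with h | h
    · left
      dsimp only
      rw [hrw j, hrw k, hpjk]
      set q := p / s (proc k) with hqdef
      have hq' : 0 < q := hq (proc k)
      have hstep : start j / q + 1 ≤ start k / q := by
        rw [div_add' _ _ _ (ne_of_gt hq')]
        apply div_le_div_of_nonneg_right ?_ hq'.le
        rw [one_mul, hqdef, ← hpjk]; exact h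
      have h0 : 0 ≤ start j / q := div_nonneg (hnn j) hq'.le
      have hceil : (⌈start j / q⌉₊ : ℝ) + 1 ≤ (⌈start k / q⌉₊ : ℝ) := by
        have : ⌈start j / q⌉₊ + 1 ≤ ⌈start k / q⌉₊ := by
          rw [← Nat.ceil_add_one h0]
          exact Nat.ceil_le_ceil hstep
        exact_mod_cast this
      calc (⌈start j / q⌉₊ : ℝ) * q + q = ((⌈start j / q⌉₊ : ℝ) + 1) * q := by ring
        _ ≤ (⌈start k / q⌉₊ : ℝ) * q := mul_le_mul_of_nonneg_right hceil hq'.le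
    · right
      dsimp only
      rw [hrw j, hrw k, ← hpjk]
      set q := p / s (proc j) with hqdef
      have hq' : 0 < q := hq (proc j)
      have hstep : start k / q + 1 ≤ start j / q := by
        rw [div_add' _ _ _ (ne_of_gt hq')]
        apply div_le_div_of_nonneg_right ?_ hq'.le
        rw [one_mul, hqdef, hpjk]; exact h
      have h0 : 0 ≤ start k / q := div_nonneg (hnn k) hq'.le
      have hceil : (⌈start k / q⌉₊ : ℝ) + 1 ≤ (⌈start j / q⌉₊ : ℝ) := by
        have : ⌈start k / q⌉₊ + 1 ≤ ⌈start j / q⌉₊ := by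
          rw [← Nat.ceil_add_one h0]
          exact Nat.ceil_le_ceil hstep
        exact_mod_cast this
      calc (⌈start k / q⌉₊ : ℝ) * q + q = ((⌈start k / q⌉₊ : ℝ) + 1) * q := by ring
        _ ≤ (⌈start j / q⌉₊ : ℝ) * q := mul_le_mul_of_nonneg_right hceil hq'.le
  · rcases Nat.eq_zero_or_pos n with hn | hn
    · subst hn
      unfold makespan
      simp only [ciSup_of_empty]
      have : 0 ≤ p / smin := (div_pos hp hsmin).le
      simpa using this
    · have : Nonempty (Fin n) := ⟨⟨0, hn⟩⟩
      unfold makespan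
      apply ciSup_le
      intro j
      have h1 : (⌈start j * s (proc j) / p⌉₊ : ℝ) * (p / s (proc j)) + p / s (proc j) ≤
          start j + p / s (proc j) + p / smin := by
        have h2 : p / s (proc j) ≤ p / smin :=
          div_le_div_of_nonneg_left hp.le hsmin (hs (proc j))
        linarith [hhigh j]
      refine h1.trans ?_
      have hb : BddAbove (Set.range fun j => start j + p / s (proc j)) :=
        Set.Finite.bddAbove (Set.finite_range _)
      exact add_le_add (le_ciSup hb j) le_rfl
end

section
/- Let jobs each of length 1 (on a speed-1 machine) have delivery times γ_j ≥ 0, and consider m uniformly related machines with speeds s_1,…,s_m, so a job on machine i takes 1/s_i. If jobs are assigned greedily in non-increasing γ_j order, each to a machine minimizing its resulting effective finish time (completion plus γ_j), and within each machine jobs run back-to-back from time 0, then exchanging the machine assignments of any two jobs cannot decrease the maximum effective finish time. -/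
/-- The (1-indexed) position of job j on its machine under assignment a, when jobs are
placed in greedy (index) order and run back-to-back from time 0. -/
def posOf {n m : ℕ} (a : Fin n → Fin m) (j : Fin n) : ℕ :=
  (Finset.univ.filter fun j' => j' ≤ j ∧ a j' = a j).card

/-- The maximum effective finish time (completion plus delivery time γ) of assignment a
on uniformly related machines of speeds s. -/
noncomputable def obj {n m : ℕ} (s : Fin m → ℝ) (γ : Fin n → ℝ) (a : Fin n → Fin m) : ℝ :=
  ⨆ j, ((posOf a j : ℝ) / s (a j) + γ j)

private lemma swap_update_eq {n m : ℕ} (a : Fin n → Fin m) (j k : Fin n) :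
    Function.update (Function.update a j (a k)) k (a j) = a ∘ Equiv.swap j k := by
  funext x
  rcases eq_or_ne x k with rfl | hxk
  · simp [Equiv.swap_apply_right]
  rcases eq_or_ne x j with rfl | hxj
  · simp [Function.update_of_ne hxk, Equiv.swap_apply_left]
  · simp [Function.update_of_ne hxk, Function.update_of_ne hxj,
      Equiv.swap_apply_of_ne_of_ne hxj hxk]

private lemma core {n m : ℕ} (s : Fin m → ℝ) (hs : ∀ i, 0 < s i)
    (γ : Fin n → ℝ) (hγ : ∀ j k : Fin n, j ≤ k → γ k ≤ γ j)
    (a : Fin n → Fin m)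
    (hgreedy : ∀ j : Fin n, ∀ i : Fin m,
      (posOf a j : ℝ) / s (a j) + γ j ≤
        (((Finset.univ.filter fun j' => j' < j ∧ a j' = i).card : ℝ) + 1) / s i + γ j)
    (j k : Fin n) (hjk : j < k) (hpq : a j ≠ a k) :
    obj s γ a ≤ obj s γ (a ∘ Equiv.swap j k) := by
  set a' := a ∘ Equiv.swap j k with ha'
  have ha'j : a' j = a k := by simp [ha']
  have ha'o : ∀ x, x ≠ j → x ≠ k → a' x = a x := fun x hxj hxk => by
    simp [ha', Equiv.swap_apply_of_ne_of_ne hxj hxk]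
  have : Nonempty (Fin n) := ⟨j⟩
  rw [obj, obj]
  refine ciSup_le fun j0 => ?_
  by_cases h1 : j0 < j
  · refine le_ciSup_of_le (Set.Finite.bddAbove (Set.finite_range _)) j0 ?_
    have hm : a' j0 = a j0 := ha'o j0 h1.ne (h1.trans hjk).ne
    have hp : posOf a' j0 = posOf a j0 := by
      unfold posOf
      rw [hm]
      congr 1
      apply Finset.filter_congr
      intro x _
      constructor
      · rintro ⟨hle, he⟩
        exact ⟨hle, by rw [← he, ha'o x (hle.trans_lt h1).ne ((hle.trans_lt h1).trans hjk).ne]⟩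
      · rintro ⟨hle, he⟩
        exact ⟨hle, by rw [ha'o x (hle.trans_lt h1).ne ((hle.trans_lt h1).trans hjk).ne, he]⟩
    show (posOf a j0 : ℝ) / s (a j0) + γ j0 ≤ (posOf a' j0 : ℝ) / s (a' j0) + γ j0
    rw [hp, hm]
  by_cases h2 : k < j0
  · refine le_ciSup_of_le (Set.Finite.bddAbove (Set.finite_range _)) j0 ?_
    have hm : a' j0 = a j0 := ha'o j0 (hjk.trans h2).ne' h2.ne'
    have hjle : j ≤ j0 := (hjk.trans h2).le
    have hkle : k ≤ j0 := h2.le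
    have hsw : ∀ x : Fin n, Equiv.swap j k x ≤ j0 ↔ x ≤ j0 := by
      intro x
      rcases eq_or_ne x j with rfl | hxj
      · rw [Equiv.swap_apply_left]; exact ⟨fun _ => hjle, fun _ => hkle⟩
      rcases eq_or_ne x k with rfl | hxk
      · rw [Equiv.swap_apply_right]; exact ⟨fun _ => hkle, fun _ => hjle⟩
      · rw [Equiv.swap_apply_of_ne_of_ne hxj hxk]
    have hp : posOf a' j0 = posOf a j0 := by
      unfold posOf
      rw [hm]
      rw [show (Finset.univ.filter fun x => x ≤ j0 ∧ a' x = a j0) =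
          (Finset.univ.filter fun x => x ≤ j0 ∧ a x = a j0).map
            (Equiv.swap j k).toEmbedding from ?_, Finset.card_map]
      ext x
      simp only [Finset.mem_map_equiv, Finset.mem_filter, Finset.mem_univ, true_and,
        Equiv.symm_swap]
      rw [hsw x]
      constructor
      · rintro ⟨hle, he⟩; exact ⟨hle, he⟩
      · rintro ⟨hle, he⟩; exact ⟨hle, he⟩
    show (posOf a j0 : ℝ) / s (a j0) + γ j0 ≤ (posOf a' j0 : ℝ) / s (a' j0) + γ j0
    rw [hp, hm]
  push_neg at h1 h2
  -- main case : j ≤ j0 ≤ k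
  set T := Finset.univ.filter (fun x => x ≤ j0 ∧ a' x = a k) with hT
  have hjT : j ∈ T := by simp [hT, h1, ha'j]
  have hTne : T.Nonempty := ⟨j, hjT⟩
  set j3 := T.max' hTne with hj3
  have hj3T : j3 ∈ T := T.max'_mem hTne
  obtain ⟨hj3le, hj3q⟩ : j3 ≤ j0 ∧ a' j3 = a k := by simpa [hT] using hj3T
  have hpos3 : posOf a' j3 = T.card := by
    unfold posOf
    congr 1
    ext x
    simp only [Finset.mem_filter, Finset.mem_univ, true_and, hj3q, hT]
    constructor
    · rintro ⟨hle, he⟩; exact ⟨hle.trans hj3le, he⟩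
    · rintro ⟨hle, he⟩; exact ⟨T.le_max' x (by simp [hT, hle, he]), he⟩
  have hsub : insert j (Finset.univ.filter fun x => x < j0 ∧ a x = a k) ⊆ T := by
    intro x hx
    rcases Finset.mem_insert.1 hx with rfl | hx
    · exact hjT
    · simp only [Finset.mem_filter, Finset.mem_univ, true_and] at hx
      obtain ⟨hlt, he⟩ := hx
      have hxj : x ≠ j := fun h => hpq (h ▸ he)
      have hxk : x ≠ k := fun h => (not_lt.2 h2) (h ▸ hlt)
      simp [hT, hlt.le, ha'o x hxj hxk, he]
  have hcard : (Finset.univ.filter fun x => x < j0 ∧ a x = a k).card + 1 ≤ T.card := by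
    have hle := Finset.card_le_card hsub
    rwa [Finset.card_insert_of_notMem (by simp [hpq])] at hle
  refine le_ciSup_of_le (Set.Finite.bddAbove (Set.finite_range _)) j3 ?_
  have hγ3 : γ j0 ≤ γ j3 := hγ j3 j0 hj3le
  show (posOf a j0 : ℝ) / s (a j0) + γ j0 ≤ (posOf a' j3 : ℝ) / s (a' j3) + γ j3
  rw [hpos3, hj3q]
  calc (posOf a j0 : ℝ) / s (a j0) + γ j0
      ≤ (((Finset.univ.filter fun x => x < j0 ∧ a x = a k).card : ℝ) + 1) / s (a k) + γ j0 :=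
        hgreedy j0 (a k)
    _ ≤ (T.card : ℝ) / s (a k) + γ j0 := by
        apply add_le_add_left
        apply div_le_div_of_nonneg_right ?_ (hs (a k)).le
        exact_mod_cast hcard
    _ ≤ (T.card : ℝ) / s (a k) + γ j3 := by linarith

/-- If unit jobs with antitone delivery times γ are assigned greedily, each to a machine
minimizing its resulting effective finish time, then exchanging the machine assignments
of any two jobs cannot decrease the maximum effective finish time. -/
theorem stmt10 (n m : ℕ) (s : Fin m → ℝ) (hs : ∀ i, 0 < s i)
    (γ : Fin n → ℝ) (hγ0 : ∀ j, 0 ≤ γ j) (hγ : ∀ j k : Fin n, j ≤ k → γ k ≤ γ j)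
    (a : Fin n → Fin m)
    (hgreedy : ∀ j : Fin n, ∀ i : Fin m,
      (posOf a j : ℝ) / s (a j) + γ j ≤
        (((Finset.univ.filter fun j' => j' < j ∧ a j' = i).card : ℝ) + 1) / s i + γ j) :
    ∀ j k : Fin n,
      obj s γ a ≤ obj s γ (Function.update (Function.update a j (a k)) k (a j)) := by
  intro j k
  by_cases hpq : a j = a k
  · have heq : Function.update (Function.update a j (a k)) k (a j) = a := by
      funext x
      rcases eq_or_ne x k with rfl | hxk
      · simp [hpq]
      rcases eq_or_ne x j with rfl | hxj
      · simp [Function.update_of_ne hxk, hpq]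
      · simp [Function.update_of_ne hxk, Function.update_of_ne hxj]
    rw [heq]
  · rw [swap_update_eq]
    rcases lt_or_gt_of_ne (fun h : j = k => hpq (by rw [h])) with h | h
    · exact core s hs γ hγ a hgreedy j k h hpq
    · rw [Equiv.swap_comm]
      exact core s hs γ hγ a hgreedy k j h (Ne.symm hpq)
end
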